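/- Let n ≥ 0 be an integer, t > 0 a real number, and a a complex number with Re(a) > 0. Then for 0 < c < Re(a), the Mellin–Barnes integral (1/(2πi)) ∫_{(c)} Γ(s+n)·Γ(a-s)·t^{-s} ds equals Γ(a+n)·t^n/(1+t)^{a+n}, where the integration is along the vertical line Re(s) = c. -/

import Mathlib

open Complex

open Real Set MeasureTheory

lemma abs_Gamma_le {s : ℂ} (hs : 0 < s.re) : ‖Complex.Gamma s‖ ≤ Real.Gamma s.re := by
  rw [Complex.Gamma_eq_integral hs, Real.Gamma_eq_integral hs, Complex.GammaIntegral]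
  refine le_trans (norm_integral_le_integral_norm _) (le_of_eq ?_)
  refine setIntegral_congr_fun measurableSet_Ioi fun x hx => ?_
  rw [norm_mul, Complex.norm_real, Real.norm_eq_abs,
    norm_cpow_eq_rpow_re_of_pos hx, _root_.abs_of_nonneg (Real.exp_pos _).le]
  simp [Complex.sub_re]

lemma key_cov (u v : ℂ) {x : ℝ} (hx : x ∈ Ioo (0:ℝ) 1) :
    |((1-x)^2)⁻¹| • (((x/(1-x) : ℝ) : ℂ)^(u-1) * (1 + ((x/(1-x) : ℝ) : ℂ))^(-(u+v)))
      = (x:ℂ)^(u-1) * ((1:ℂ)-x)^(v-1) := by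
  obtain ⟨hx0, hx1⟩ := hx
  have h1x : (0:ℝ) < 1 - x := by linarith
  have h1 : (1:ℝ) + x/(1-x) = (1-x)⁻¹ := by field_simp; ring
  have hxw : (x:ℝ)/(1-x) = x * (1-x)⁻¹ := div_eq_mul_inv _ _
  set w : ℂ := (((1-x)⁻¹ : ℝ) : ℂ) with hw
  have hwpos : (0:ℝ) < (1-x)⁻¹ := inv_pos.mpr h1x
  have hwne : w ≠ 0 := by
    simpa [hw] using Complex.ofReal_ne_zero.mpr (ne_of_gt hwpos)
  have harg : w.arg ≠ Real.pi := by
    rw [hw, Complex.arg_ofReal_of_nonneg hwpos.le]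
    exact Real.pi_ne_zero.symm
  have hsplit : (((x/(1-x) : ℝ) : ℂ))^(u-1) = (x:ℂ)^(u-1) * w^(u-1) := by
    rw [hxw, Complex.ofReal_mul]
    exact Complex.mul_cpow_ofReal_nonneg hx0.le hwpos.le _
  have h2 : (1 + ((x/(1-x) : ℝ) : ℂ)) = w := by
    rw [hw, ← Complex.ofReal_one, ← Complex.ofReal_add, h1]
  have habs : |((1-x)^2)⁻¹| = (1-x)⁻¹ * (1-x)⁻¹ := by
    rw [_root_.abs_of_nonneg (by positivity)]
    field_simp
  rw [hsplit, h2, habs, Complex.real_smul, Complex.ofReal_mul, ← hw]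
  have : w * w * ((x:ℂ)^(u-1) * w^(u-1) * w^(-(u+v)))
      = (x:ℂ)^(u-1) * (w^(1:ℂ) * w^(1:ℂ) * w^(u-1) * w^(-(u+v))) := by
    rw [Complex.cpow_one]; ring
  rw [this, ← Complex.cpow_add _ _ hwne, ← Complex.cpow_add _ _ hwne,
    ← Complex.cpow_add _ _ hwne]
  have hexp : (1:ℂ) + 1 + (u-1) + (-(u+v)) = -(v-1) := by ring
  rw [hexp, Complex.cpow_neg, ← Complex.inv_cpow _ _ harg]
  congr 2
  rw [hw]
  push_cast [inv_inv]
  ring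

lemma phi_image : (fun x : ℝ => x / (1 - x)) '' Ioo 0 1 = Ioi (0:ℝ) := by
  ext t
  constructor
  · rintro ⟨x, ⟨hx0, hx1⟩, rfl⟩
    exact div_pos hx0 (by linarith)
  · intro ht
    refine ⟨t / (1 + t), ⟨div_pos ht (by linarith [mem_Ioi.mp ht]), ?_⟩, ?_⟩
    · rw [div_lt_one (by linarith [mem_Ioi.mp ht])]; linarith [mem_Ioi.mp ht]
    · have ht' : (0:ℝ) < t := ht
      field_simp; ring

lemma phi_deriv : ∀ x ∈ Ioo (0:ℝ) 1,
    HasDerivWithinAt (fun x : ℝ => x / (1 - x)) (((1-x)^2)⁻¹) (Ioo 0 1) x := by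
  intro x hx
  have h1x : (1:ℝ) - x ≠ 0 := by have := hx.2; intro h; simp only [sub_eq_zero] at h; linarith
  have := (hasDerivAt_id x).div ((hasDerivAt_id x).const_sub 1) h1x
  convert this.hasDerivWithinAt using 1
  case e'_9 =>
    show ((1-x)^2)⁻¹ = (1 * (1 - x) - x * -1) / (1 - x) ^ 2
    rw [inv_eq_one_div]; congr 1; ring
  all_goals rfl

lemma phi_inj : InjOn (fun x : ℝ => x / (1 - x)) (Ioo 0 1) := by
  intro x hx y hy h
  have h1x : (1:ℝ) - x ≠ 0 := by have := hx.2; intro h; simp only [sub_eq_zero] at h; linarith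
  have h1y : (1:ℝ) - y ≠ 0 := by have := hy.2; intro h; simp only [sub_eq_zero] at h; linarith
  field_simp at h
  nlinarith [h]

lemma betaIoi {u v : ℂ} (hu : 0 < u.re) (hv : 0 < v.re) :
    IntegrableOn (fun t : ℝ => (t:ℂ)^(u-1) * ((1:ℂ)+t)^(-(u+v))) (Ioi 0) ∧
    ∫ t in Ioi (0:ℝ), (t:ℂ)^(u-1) * ((1:ℂ)+t)^(-(u+v))
      = Complex.Gamma u * Complex.Gamma v / Complex.Gamma (u+v) := by
  set g : ℝ → ℂ := fun t => (t:ℂ)^(u-1) * ((1:ℂ)+t)^(-(u+v)) with hg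
  have hbeta : IntegrableOn (fun x : ℝ => (x:ℂ)^(u-1) * ((1:ℂ)-x)^(v-1)) (Ioo 0 1) := by
    have := (Complex.betaIntegral_convergent hu hv)
    rw [intervalIntegrable_iff] at this
    simpa [uIoc_of_le (zero_le_one' ℝ)] using this.mono_set Ioo_subset_Ioc_self
  have hcongr : ∀ x ∈ Ioo (0:ℝ) 1,
      (fun x : ℝ => |((1-x)^2)⁻¹| • g (x / (1-x))) x
        = (fun x : ℝ => (x:ℂ)^(u-1) * ((1:ℂ)-x)^(v-1)) x := by
    intro x hx
    simp only [hg]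
    have := key_cov u v hx
    push_cast at this ⊢
    convert this using 3 <;> push_cast <;> ring
  have hint : IntegrableOn g (Ioi 0) := by
    rw [← phi_image, integrableOn_image_iff_integrableOn_abs_deriv_smul
      measurableSet_Ioo phi_deriv phi_inj]
    exact (hbeta.congr_fun (fun x hx => (hcongr x hx).symm) measurableSet_Ioo)
  refine ⟨hint, ?_⟩
  have : ∫ t in Ioi (0:ℝ), g t = ∫ x in Ioo (0:ℝ) 1, |((1-x)^2)⁻¹| • g (x / (1-x)) := by
    rw [← phi_image, integral_image_eq_integral_abs_deriv_smul
      measurableSet_Ioo phi_deriv phi_inj]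
  rw [this, setIntegral_congr_fun measurableSet_Ioo hcongr]
  have hbi : ∫ x in Ioo (0:ℝ) 1, (x:ℂ)^(u-1) * ((1:ℂ)-x)^(v-1) = Complex.betaIntegral u v := by
    rw [Complex.betaIntegral, intervalIntegral.integral_of_le zero_le_one,
      ← integral_Ioc_eq_integral_Ioo]
  rw [hbi]
  have h1 := Complex.Gamma_mul_Gamma_eq_betaIntegral hu hv
  have h2 : Complex.Gamma (u+v) ≠ 0 :=
    Complex.Gamma_ne_zero_of_re_pos (by simp only [Complex.add_re]; positivity)
  field_simp [h1]
  rw [h1]; ring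

lemma mellin_f_eq (n : ℕ) (a s : ℂ) (h1 : 0 < (s+(n:ℂ)).re) (h2 : 0 < (a-s).re) :
    MellinConvergent (fun x : ℝ => (x:ℂ)^(n:ℕ) * ((1:ℂ)+x)^(-(a+n))) s ∧
    mellin (fun x : ℝ => (x:ℂ)^(n:ℕ) * ((1:ℂ)+x)^(-(a+n))) s
      = Complex.Gamma (s+n) * Complex.Gamma (a-s) / Complex.Gamma (a+n) := by
  have hkey : ∀ t ∈ Ioi (0:ℝ),
      (t:ℂ)^(s-1) • ((t:ℂ)^(n:ℕ) * ((1:ℂ)+t)^(-(a+n)))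
        = (t:ℂ)^((s+(n:ℂ))-1) * ((1:ℂ)+t)^(-((s+(n:ℂ))+(a-s))) := by
    intro t ht
    have htne : (t:ℂ) ≠ 0 := Complex.ofReal_ne_zero.mpr (ne_of_gt ht)
    have hexp : -((s+(n:ℂ))+(a-s)) = -(a+n) := by ring
    rw [smul_eq_mul, hexp, ← mul_assoc, ← Complex.cpow_natCast,
      ← Complex.cpow_add _ _ htne]
    congr 2
    ring
  obtain ⟨hint, hval⟩ := betaIoi h1 h2
  have heq : (s+(n:ℂ))+(a-s) = a+n := by ring
  constructor
  · exact hint.congr_fun (fun t ht => (hkey t ht).symm) measurableSet_Ioi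
  · rw [mellin, setIntegral_congr_fun measurableSet_Ioi hkey, hval, heq]

lemma Gamma_bound2 {z : ℂ} (hz : 0 < z.re) :
    ‖Complex.Gamma z‖ * z.im^2 ≤ Real.Gamma (z.re+2) := by
  have hz0 : z ≠ 0 := by intro h; rw [h] at hz; simp at hz
  have hz1 : z + 1 ≠ 0 := by
    intro h
    have : (z+1).re = 0 := by rw [h]; simp
    simp only [Complex.add_re, Complex.one_re] at this
    linarith
  have h2 : Complex.Gamma (z+2) = (z+1) * z * Complex.Gamma z := by
    have e1 : z + 2 = (z+1) + 1 := by ring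
    rw [e1, Complex.Gamma_add_one _ hz1, Complex.Gamma_add_one _ hz0]
    ring
  have h3 : ‖Complex.Gamma (z+2)‖ ≤ Real.Gamma (z.re+2) := by
    have := abs_Gamma_le (s := z+2) (by simp; linarith)
    simpa using this
  calc ‖Complex.Gamma z‖ * z.im^2
      ≤ ‖z+1‖ * ‖z‖ * ‖Complex.Gamma z‖ := by
        have i1 : |z.im| ≤ ‖z‖ := Complex.abs_im_le_norm z
        have i2 : |z.im| ≤ ‖z+1‖ := by
          have : (z+1).im = z.im := by simp
          simpa [this] using Complex.abs_im_le_norm (z+1)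
        have : z.im^2 = |z.im| * |z.im| := by rw [← abs_mul, sq, abs_mul_self]
        rw [this]
        have hmm : |z.im| * |z.im| ≤ ‖z+1‖ * ‖z‖ :=
          mul_le_mul i2 i1 (abs_nonneg _) (norm_nonneg _)
        nlinarith [hmm, norm_nonneg (Complex.Gamma z)]
    _ = ‖Complex.Gamma (z+2)‖ := by rw [h2]; rw [norm_mul, norm_mul]
    _ ≤ Real.Gamma (z.re+2) := h3

lemma vertical_integrable (n : ℕ) (a : ℂ) (c : ℝ) (hc0 : 0 < c) (hca : c < a.re) :
    MeasureTheory.Integrable (fun y : ℝ =>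
      Complex.Gamma ((c:ℂ)+(y:ℂ)*Complex.I+(n:ℂ)) * Complex.Gamma (a-((c:ℂ)+(y:ℂ)*Complex.I))
        / Complex.Gamma (a+(n:ℂ))) := by
  set A : ℝ := c + n with hA
  set B : ℝ := a.re - c with hB
  have hApos : 0 < A := by positivity
  have hBpos : 0 < B := by simp [hB]; linarith
  have hre1 : ∀ y : ℝ, ((c:ℂ)+(y:ℂ)*Complex.I+(n:ℂ)).re = A := by intro y; simp [hA]
  have him1 : ∀ y : ℝ, ((c:ℂ)+(y:ℂ)*Complex.I+(n:ℂ)).im = y := by intro y; simp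
  have hre2 : ∀ y : ℝ, (a-((c:ℂ)+(y:ℂ)*Complex.I)).re = B := by intro y; simp [hB]
  have hD : 0 < ‖Complex.Gamma (a+(n:ℂ))‖ := by
    refine norm_pos_iff.mpr (Complex.Gamma_ne_zero_of_re_pos ?_)
    simp only [Complex.add_re, Complex.natCast_re]
    have h0 : (0:ℝ) < a.re := hc0.trans hca
    have h1 : (0:ℝ) ≤ (n:ℝ) := Nat.cast_nonneg n
    linarith
  set G1 := Real.Gamma A
  set G2 := Real.Gamma (A+2)
  set GB := Real.Gamma B
  have hG1 : 0 < G1 := Real.Gamma_pos_of_pos hApos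
  have hG2 : 0 < G2 := Real.Gamma_pos_of_pos (by linarith)
  have hGB : 0 < GB := Real.Gamma_pos_of_pos hBpos
  set D := ‖Complex.Gamma (a+(n:ℂ))‖
  -- measurability
  have hmeas : Continuous (fun y : ℝ =>
      Complex.Gamma ((c:ℂ)+(y:ℂ)*Complex.I+(n:ℂ)) * Complex.Gamma (a-((c:ℂ)+(y:ℂ)*Complex.I))
        / Complex.Gamma (a+(n:ℂ))) := by
    have hc1 : Continuous (fun y : ℝ => (c:ℂ)+(y:ℂ)*Complex.I+(n:ℂ)) := by continuity
    have hc2 : Continuous (fun y : ℝ => a-((c:ℂ)+(y:ℂ)*Complex.I)) := by continuity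
    have hg1 : Continuous (fun y : ℝ => Complex.Gamma ((c:ℂ)+(y:ℂ)*Complex.I+(n:ℂ))) := by
      rw [continuous_iff_continuousAt]
      intro y
      refine (Complex.differentiableAt_Gamma _ ?_).continuousAt.comp hc1.continuousAt
      intro m h
      have := congrArg Complex.re h
      rw [hre1 y] at this
      simp only [Complex.neg_re, Complex.natCast_re] at this
      have : (0:ℝ) ≤ m := Nat.cast_nonneg m
      linarith [hApos, congrArg Complex.re h]
    have hg2 : Continuous (fun y : ℝ => Complex.Gamma (a-((c:ℂ)+(y:ℂ)*Complex.I))) := by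
      rw [continuous_iff_continuousAt]
      intro y
      refine (Complex.differentiableAt_Gamma _ ?_).continuousAt.comp hc2.continuousAt
      intro m h
      have h' := congrArg Complex.re h
      rw [hre2 y] at h'
      simp only [Complex.neg_re, Complex.natCast_re] at h'
      have : (0:ℝ) ≤ m := Nat.cast_nonneg m
      linarith
    exact (hg1.mul hg2).div_const _
  refine MeasureTheory.Integrable.mono'
    ((integrable_inv_one_add_sq.const_mul (2*(G1+G2)*GB/D))) hmeas.aestronglyMeasurable
    (Filter.Eventually.of_forall fun y => ?_)
  have key1 : ‖Complex.Gamma ((c:ℂ)+(y:ℂ)*Complex.I+(n:ℂ))‖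
      ≤ 2*(G1+G2) * (1+y^2)⁻¹ := by
    rcases le_or_gt (y^2) 1 with hy | hy
    · have b1 : ‖Complex.Gamma ((c:ℂ)+(y:ℂ)*Complex.I+(n:ℂ))‖ ≤ G1 := by
        have := abs_Gamma_le (s := (c:ℂ)+(y:ℂ)*Complex.I+(n:ℂ)) (by rw [hre1]; exact hApos)
        rwa [hre1] at this
      have : (1:ℝ) + y^2 ≤ 2 := by linarith
      calc ‖Complex.Gamma ((c:ℂ)+(y:ℂ)*Complex.I+(n:ℂ))‖ ≤ G1 := b1
        _ ≤ 2*(G1+G2) * 2⁻¹ := by linarith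
        _ ≤ 2*(G1+G2) * (1+y^2)⁻¹ := by
            have h2i : (1+y^2)⁻¹ ≥ 2⁻¹ := by
              apply inv_anti₀ <;> nlinarith
            nlinarith [h2i, hG1, hG2]
    · have b2 := Gamma_bound2 (z := (c:ℂ)+(y:ℂ)*Complex.I+(n:ℂ)) (by rw [hre1]; exact hApos)
      rw [hre1, him1] at b2
      have hy0 : (0:ℝ) < y^2 := by linarith
      have b2' : ‖Complex.Gamma ((c:ℂ)+(y:ℂ)*Complex.I+(n:ℂ))‖ ≤ G2 / y^2 := by
        rw [le_div_iff₀ hy0]; exact b2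
      have hq : (1:ℝ)/2 ≤ y^2/(1+y^2) := by
        rw [le_div_iff₀ (by positivity : (0:ℝ) < 1+y^2)]
        nlinarith
      have hstep : G2 / y^2 ≤ 2*(G1+G2) * (1+y^2)⁻¹ := by
        rw [div_le_iff₀ hy0]
        have e : 2*(G1+G2)*(1+y^2)⁻¹*y^2 = 2*(G1+G2)*(y^2/(1+y^2)) := by ring
        rw [e]
        nlinarith [mul_le_mul_of_nonneg_left hq (by positivity : (0:ℝ) ≤ 2*(G1+G2))]
      linarith
  have key2 : ‖Complex.Gamma (a-((c:ℂ)+(y:ℂ)*Complex.I))‖ ≤ GB := by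
    have := abs_Gamma_le (s := a-((c:ℂ)+(y:ℂ)*Complex.I)) (by rw [hre2]; exact hBpos)
    rwa [hre2] at this
  rw [norm_div, norm_mul]
  calc ‖Complex.Gamma ((c:ℂ)+(y:ℂ)*Complex.I+(n:ℂ))‖
        * ‖Complex.Gamma (a-((c:ℂ)+(y:ℂ)*Complex.I))‖ / D
      ≤ (2*(G1+G2) * (1+y^2)⁻¹) * GB / D := by
        gcongr
    _ = 2*(G1+G2)*GB/D * (1+y^2)⁻¹ := by ring


/-- The integral `∫_{(c)} g(s) ds` over the vertical line `Re(s) = c`,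
from `c - i∞` to `c + i∞`. -/
noncomputable def verticalIntegral (g : ℂ → ℂ) (c : ℝ) : ℂ :=
  ∫ y : ℝ, g (c + y * Complex.I) * Complex.I

/-- For `n ≥ 0`, `t > 0`, `Re(a) > 0` and `0 < c < Re(a)`,
`(1/(2πi)) ∫_{(c)} Γ(s+n) Γ(a-s) t^{-s} ds = Γ(a+n) tⁿ / (1+t)^{a+n}`. -/
theorem mellinBarnes_beta (n : ℕ) (t : ℝ) (ht : 0 < t) (a : ℂ) (ha : 0 < a.re)
    (c : ℝ) (hc0 : 0 < c) (hca : c < a.re) :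
    1 / (2 * Real.pi * Complex.I) * verticalIntegral
      (fun s => Complex.Gamma (s + n) * Complex.Gamma (a - s) * (t : ℂ) ^ (-s)) c =
      Complex.Gamma (a + n) * (t : ℂ) ^ (n : ℕ) / (1 + (t : ℂ)) ^ (a + n) := by
  set f : ℝ → ℂ := fun x => (x:ℂ)^(n:ℕ) * ((1:ℂ)+x)^(-(a+(n:ℂ))) with hf
  have hGne : Complex.Gamma (a+(n:ℂ)) ≠ 0 := by
    refine Complex.Gamma_ne_zero_of_re_pos ?_
    simp only [Complex.add_re, Complex.natCast_re]
    have : (0:ℝ) ≤ (n:ℝ) := Nat.cast_nonneg n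
    linarith
  have h1 : ∀ y : ℝ, 0 < ((((c:ℝ):ℂ)+(y:ℂ)*Complex.I)+(n:ℂ)).re := by
    intro y
    simp only [Complex.add_re, Complex.ofReal_re, Complex.mul_re, Complex.I_re,
      Complex.I_im, Complex.ofReal_im, Complex.natCast_re]
    have : (0:ℝ) ≤ (n:ℝ) := Nat.cast_nonneg n
    nlinarith
  have h2 : ∀ y : ℝ, 0 < (a-(((c:ℝ):ℂ)+(y:ℂ)*Complex.I)).re := by
    intro y
    simp only [Complex.sub_re, Complex.add_re, Complex.ofReal_re, Complex.mul_re,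
      Complex.I_re, Complex.I_im, Complex.ofReal_im]
    nlinarith
  have hmell : ∀ y : ℝ, mellin f (((c:ℝ):ℂ)+(y:ℂ)*Complex.I)
      = Complex.Gamma ((((c:ℝ):ℂ)+(y:ℂ)*Complex.I)+(n:ℂ))
        * Complex.Gamma (a-(((c:ℝ):ℂ)+(y:ℂ)*Complex.I)) / Complex.Gamma (a+(n:ℂ)) :=
    fun y => (mellin_f_eq n a _ (h1 y) (h2 y)).2
  have hconv : MellinConvergent f ((c:ℝ):ℂ) := by
    have hh1 : 0 < (((c:ℝ):ℂ)+(n:ℂ)).re := by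
      have := h1 0; simpa using this
    have hh2 : 0 < (a-((c:ℝ):ℂ)).re := by
      have := h2 0; simpa using this
    exact (mellin_f_eq n a ((c:ℝ):ℂ) hh1 hh2).1
  have hvert : Complex.VerticalIntegrable (mellin f) c :=
    (vertical_integrable n a c hc0 hca).congr
      (Filter.Eventually.of_forall fun y => (hmell y).symm)
  have hcont : ContinuousAt f t := by
    apply ContinuousAt.mul
    · exact ((Complex.continuous_ofReal).pow n).continuousAt
    · refine ContinuousAt.comp (g := fun z : ℂ => z ^ (-(a+(n:ℂ)))) ?_
        (continuous_const.add Complex.continuous_ofReal).continuousAt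
      refine continuousAt_cpow_const (Complex.mem_slitPlane_iff.mpr (Or.inl ?_))
      simp only [Complex.add_re, Complex.one_re, Complex.ofReal_re]
      linarith
  have hinv := mellinInv_mellin_eq c f ht hconv hvert hcont
  rw [mellinInv] at hinv
  have hint_eq : (∫ y : ℝ, (fun s => Complex.Gamma (s + n) * Complex.Gamma (a - s)
        * (t : ℂ) ^ (-s)) ((c:ℝ) + (y:ℝ) * Complex.I) * Complex.I)
      = (Complex.Gamma (a+(n:ℂ)) * Complex.I)
        * ∫ y : ℝ, (t:ℂ)^(-(((c:ℝ):ℂ)+(y:ℂ)*Complex.I)) • mellin f (((c:ℝ):ℂ)+(y:ℂ)*Complex.I) := by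
    rw [← MeasureTheory.integral_const_mul]
    congr 1
    funext y
    rw [hmell y, smul_eq_mul]
    field_simp
  rw [verticalIntegral, hint_eq]
  have hsum : (∫ y : ℝ, (t:ℂ)^(-(((c:ℝ):ℂ)+(y:ℂ)*Complex.I)) • mellin f (((c:ℝ):ℂ)+(y:ℂ)*Complex.I))
      = (2*(Real.pi:ℂ)) * f t := by
    rw [Complex.real_smul] at hinv
    push_cast at hinv
    have hpine : ((Real.pi:ℂ)) ≠ 0 := by exact_mod_cast Real.pi_ne_zero
    have h2pi : (2*(Real.pi:ℂ)) ≠ 0 := by simp [hpine]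
    calc (∫ y : ℝ, (t:ℂ)^(-(((c:ℝ):ℂ)+(y:ℂ)*Complex.I)) • mellin f (((c:ℝ):ℂ)+(y:ℂ)*Complex.I))
        = (2*(Real.pi:ℂ)) * ((1/(2*(Real.pi:ℂ)))
            * ∫ y : ℝ, (t:ℂ)^(-(((c:ℝ):ℂ)+(y:ℂ)*Complex.I)) • mellin f (((c:ℝ):ℂ)+(y:ℂ)*Complex.I)) := by
          rw [← mul_assoc, mul_one_div_cancel h2pi, one_mul]
      _ = (2*(Real.pi:ℂ)) * f t := by rw [hinv]
  rw [hsum]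
  have hpine : ((Real.pi:ℂ)) ≠ 0 := by exact_mod_cast Real.pi_ne_zero
  have hbase : ((1:ℂ)+(t:ℂ)) ^ (a+(n:ℂ)) ≠ 0 := by
    rw [Ne, Complex.cpow_eq_zero_iff]
    rintro ⟨h, -⟩
    have := congrArg Complex.re h
    simp only [Complex.add_re, Complex.one_re, Complex.ofReal_re, Complex.zero_re] at this
    linarith
  simp only [hf]
  rw [Complex.cpow_neg]
  field_simp [Complex.I_ne_zero]
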